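/- arXiv:0903.1340 — 6 statements merged into one kernel-verified Lean document; each statement's English description precedes it below -/
import Mathlib

section
/- The function ξ(x) = H((1-√(1-x²))/2, (1+√(1-x²))/2), where H(p,q) = -p·log p - q·log q is the binary entropy, is strictly convex on the interval [-1, 1]. -/
/-- Binary Shannon entropy of a two-point distribution `(p, q)`. -/
noncomputable def binEnt (p q : ℝ) : ℝ := -(p * Real.log p) - q * Real.log q

/-- ξ(x) = H((1-√(1-x²))/2, (1+√(1-x²))/2). -/
noncomputable def xiFn (x : ℝ) : ℝ :=
  binEnt ((1 - Real.sqrt (1 - x ^ 2)) / 2) ((1 + Real.sqrt (1 - x ^ 2)) / 2)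

open Real Set

/-- Candidate derivative of ξ on (0,1). -/
noncomputable def phiAux (x : ℝ) : ℝ :=
  x * (Real.log (1 + Real.sqrt (1 - x ^ 2)) - Real.log (1 - Real.sqrt (1 - x ^ 2))) /
    (2 * Real.sqrt (1 - x ^ 2))

lemma xiFn_eq (x : ℝ) :
    xiFn x = Real.log 2 -
      ((1 + Real.sqrt (1 - x ^ 2)) * Real.log (1 + Real.sqrt (1 - x ^ 2)) +
       (1 - Real.sqrt (1 - x ^ 2)) * Real.log (1 - Real.sqrt (1 - x ^ 2))) / 2 := by
  set s := Real.sqrt (1 - x ^ 2) with hs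
  have hs0 : 0 ≤ s := Real.sqrt_nonneg _
  have hs1 : s ≤ 1 := by
    calc s ≤ Real.sqrt 1 := Real.sqrt_le_sqrt (by nlinarith)
      _ = 1 := Real.sqrt_one
  rcases eq_or_lt_of_le hs1 with h1 | h1
  · simp only [xiFn, binEnt, ← hs, h1]
    norm_num
  · have h2 : (0:ℝ) < 1 - s := by linarith
    have h3 : (0:ℝ) < 1 + s := by linarith
    simp only [xiFn, binEnt, ← hs]
    rw [Real.log_div h2.ne' two_ne_zero, Real.log_div h3.ne' two_ne_zero]
    ring

lemma continuous_xiFn : Continuous xiFn := by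
  have h : xiFn = fun x => Real.log 2 -
      ((1 + Real.sqrt (1 - x ^ 2)) * Real.log (1 + Real.sqrt (1 - x ^ 2)) +
       (1 - Real.sqrt (1 - x ^ 2)) * Real.log (1 - Real.sqrt (1 - x ^ 2))) / 2 :=
    funext xiFn_eq
  rw [h]
  have hs : Continuous fun x : ℝ => Real.sqrt (1 - x ^ 2) :=
    Real.continuous_sqrt.comp (by continuity)
  have h1 : Continuous fun x : ℝ =>
      (1 + Real.sqrt (1 - x ^ 2)) * Real.log (1 + Real.sqrt (1 - x ^ 2)) :=
    Real.Continuous.mul_log (continuous_const.add hs)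
  have h2 : Continuous fun x : ℝ =>
      (1 - Real.sqrt (1 - x ^ 2)) * Real.log (1 - Real.sqrt (1 - x ^ 2)) :=
    Real.Continuous.mul_log (continuous_const.sub hs)
  exact continuous_const.sub ((h1.add h2).div_const 2)

lemma hasDerivAt_s {x : ℝ} (hx : x ∈ Ioo (0:ℝ) 1) :
    HasDerivAt (fun x : ℝ => Real.sqrt (1 - x ^ 2)) (-x / Real.sqrt (1 - x ^ 2)) x := by
  have h1 : (0:ℝ) < 1 - x ^ 2 := by nlinarith [hx.1, hx.2]
  have hs0 : 0 < Real.sqrt (1 - x ^ 2) := Real.sqrt_pos.mpr h1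
  have hu : HasDerivAt (fun x : ℝ => 1 - x ^ 2) (-(2 * x)) x := by
    simpa using (hasDerivAt_pow 2 x).const_sub 1
  have h2 := (Real.hasDerivAt_sqrt h1.ne').comp x hu
  convert! h2 using 1
  field_simp

lemma hasDerivAt_xiFn {x : ℝ} (hx : x ∈ Ioo (0:ℝ) 1) : HasDerivAt xiFn (phiAux x) x := by
  obtain ⟨hx0, hx1⟩ := hx
  have h1 : (0:ℝ) < 1 - x ^ 2 := by nlinarith
  set s := Real.sqrt (1 - x ^ 2) with hsdef
  have hs0 : 0 < s := Real.sqrt_pos.mpr h1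
  have hsq : s ^ 2 = 1 - x ^ 2 := Real.sq_sqrt h1.le
  have hs1 : s < 1 := by nlinarith
  have h1p : (0:ℝ) < 1 + s := by linarith
  have h1m : (0:ℝ) < 1 - s := by linarith
  have hds : HasDerivAt (fun x : ℝ => Real.sqrt (1 - x ^ 2)) (-x / s) x :=
    hasDerivAt_s ⟨hx0, hx1⟩
  have hA : HasDerivAt (fun x : ℝ =>
      (1 + Real.sqrt (1 - x ^ 2)) * Real.log (1 + Real.sqrt (1 - x ^ 2)))
      ((Real.log (1 + s) + 1) * (-x / s)) x :=
    by exact (Real.hasDerivAt_mul_log h1p.ne').comp x (hds.const_add 1)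
  have hB : HasDerivAt (fun x : ℝ =>
      (1 - Real.sqrt (1 - x ^ 2)) * Real.log (1 - Real.sqrt (1 - x ^ 2)))
      ((Real.log (1 - s) + 1) * (-(-x / s))) x :=
    by exact (Real.hasDerivAt_mul_log h1m.ne').comp x (hds.const_sub 1)
  have hF : HasDerivAt (fun x : ℝ => Real.log 2 -
      ((1 + Real.sqrt (1 - x ^ 2)) * Real.log (1 + Real.sqrt (1 - x ^ 2)) +
       (1 - Real.sqrt (1 - x ^ 2)) * Real.log (1 - Real.sqrt (1 - x ^ 2))) / 2)
      (-(((Real.log (1 + s) + 1) * (-x / s) + (Real.log (1 - s) + 1) * (-(-x / s))) / 2)) x :=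
    ((hA.add hB).div_const 2).const_sub (Real.log 2)
  have hxi : xiFn = fun x : ℝ => Real.log 2 -
      ((1 + Real.sqrt (1 - x ^ 2)) * Real.log (1 + Real.sqrt (1 - x ^ 2)) +
       (1 - Real.sqrt (1 - x ^ 2)) * Real.log (1 - Real.sqrt (1 - x ^ 2))) / 2 :=
    funext xiFn_eq
  rw [hxi]
  convert hF using 1
  simp only [phiAux, ← hsdef]
  field_simp
  ring

lemma hasDerivAt_phiAux {x : ℝ} (hx : x ∈ Ioo (0:ℝ) 1) :
    HasDerivAt phiAux
      (((Real.log (1 + Real.sqrt (1 - x ^ 2)) - Real.log (1 - Real.sqrt (1 - x ^ 2))) / 2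
        - Real.sqrt (1 - x ^ 2)) / Real.sqrt (1 - x ^ 2) ^ 3) x := by
  obtain ⟨hx0, hx1⟩ := hx
  have h1 : (0:ℝ) < 1 - x ^ 2 := by nlinarith
  set s := Real.sqrt (1 - x ^ 2) with hsdef
  have hs0 : 0 < s := Real.sqrt_pos.mpr h1
  have hsq : s ^ 2 = 1 - x ^ 2 := Real.sq_sqrt h1.le
  have hs1 : s < 1 := by nlinarith
  have h1p : (0:ℝ) < 1 + s := by linarith
  have h1m : (0:ℝ) < 1 - s := by linarith
  have hds : HasDerivAt (fun x : ℝ => Real.sqrt (1 - x ^ 2)) (-x / s) x :=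
    hasDerivAt_s ⟨hx0, hx1⟩
  have hl1 : HasDerivAt (fun x : ℝ => Real.log (1 + Real.sqrt (1 - x ^ 2)))
      ((1 + s)⁻¹ * (-x / s)) x :=
    by exact (Real.hasDerivAt_log h1p.ne').comp x (hds.const_add 1)
  have hl2 : HasDerivAt (fun x : ℝ => Real.log (1 - Real.sqrt (1 - x ^ 2)))
      ((1 - s)⁻¹ * (-(-x / s))) x :=
    by exact (Real.hasDerivAt_log h1m.ne').comp x (hds.const_sub 1)
  have hnum : HasDerivAt (fun x : ℝ => x *
      (Real.log (1 + Real.sqrt (1 - x ^ 2)) - Real.log (1 - Real.sqrt (1 - x ^ 2))))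
      (1 * (Real.log (1 + s) - Real.log (1 - s)) +
        x * ((1 + s)⁻¹ * (-x / s) - (1 - s)⁻¹ * (-(-x / s)))) x :=
    (hasDerivAt_id x).mul (hl1.sub hl2)
  have hden : HasDerivAt (fun x : ℝ => 2 * Real.sqrt (1 - x ^ 2)) (2 * (-x / s)) x :=
    hds.const_mul 2
  have hne : (2:ℝ) * s ≠ 0 := by positivity
  have hdiv := hnum.div hden hne
  have hphieq : phiAux = fun x : ℝ => (x *
      (Real.log (1 + Real.sqrt (1 - x ^ 2)) - Real.log (1 - Real.sqrt (1 - x ^ 2)))) /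
      (2 * Real.sqrt (1 - x ^ 2)) := by
    funext y
    simp [phiAux, mul_div_assoc]
  rw [hphieq]
  convert! hdiv using 1
  simp only [← hsdef]
  have hx2 : x ^ 2 = 1 - s ^ 2 := by linarith
  field_simp
  linear_combination (-(
    ((Real.log (1 + s) - Real.log (1 - s)) * (1 - s ^ 2) - 2 * s))) * hx2

lemma two_mul_lt_log_sub {t : ℝ} (h0 : 0 < t) (h1 : t < 1) :
    2 * t < Real.log (1 + t) - Real.log (1 - t) := by
  set f : ℝ → ℝ := fun u => Real.log (1 + u) - Real.log (1 - u) - 2 * u with hf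
  have hderiv : ∀ u ∈ Icc (0:ℝ) t, HasDerivAt f ((1 + u)⁻¹ + (1 - u)⁻¹ - 2) u := by
    intro u hu
    have h1p : (0:ℝ) < 1 + u := by nlinarith [hu.1]
    have h1m : (0:ℝ) < 1 - u := by nlinarith [hu.2]
    have ha : HasDerivAt (fun u : ℝ => Real.log (1 + u)) ((1 + u)⁻¹ * 1) u :=
      (Real.hasDerivAt_log h1p.ne').comp u ((hasDerivAt_id u).const_add 1)
    have hb : HasDerivAt (fun u : ℝ => Real.log (1 - u)) ((1 - u)⁻¹ * (-1)) u :=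
      (Real.hasDerivAt_log h1m.ne').comp u ((hasDerivAt_id u).const_sub 1)
    have hc := (ha.sub hb).sub ((hasDerivAt_id u).const_mul 2)
    convert! hc using 1
    ring
  have hmono : StrictMonoOn f (Icc 0 t) := by
    apply strictMonoOn_of_deriv_pos (convex_Icc 0 t)
    · intro u hu
      exact (hderiv u hu).continuousAt.continuousWithinAt
    · intro u hu
      rw [interior_Icc] at hu
      rw [(hderiv u (Ioo_subset_Icc_self hu)).deriv]
      have h1p : (0:ℝ) < 1 + u := by nlinarith [hu.1]
      have h1m : (0:ℝ) < 1 - u := by nlinarith [hu.2]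
      have key : (1 + u)⁻¹ + (1 - u)⁻¹ - 2 = 2 * u ^ 2 / ((1 + u) * (1 - u)) := by
        field_simp
        ring
      rw [key]
      exact div_pos (by nlinarith [hu.1]) (by nlinarith)
  have h := hmono (left_mem_Icc.mpr h0.le) (right_mem_Icc.mpr h0.le) h0
  have hf0 : f 0 = 0 := by simp [hf]
  rw [hf0] at h
  simp only [hf] at h
  linarith

lemma phiAux_pos {x : ℝ} (hx : x ∈ Ioo (0:ℝ) 1) : 0 < phiAux x := by
  obtain ⟨hx0, hx1⟩ := hx
  have h1 : (0:ℝ) < 1 - x ^ 2 := by nlinarith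
  set s := Real.sqrt (1 - x ^ 2) with hsdef
  have hs0 : 0 < s := Real.sqrt_pos.mpr h1
  have hsq : s ^ 2 = 1 - x ^ 2 := Real.sq_sqrt h1.le
  have hs1 : s < 1 := by nlinarith
  have key := two_mul_lt_log_sub hs0 hs1
  have : 0 < x * (Real.log (1 + s) - Real.log (1 - s)) := by nlinarith
  exact div_pos this (by positivity)

lemma strictMonoOn_phiAux : StrictMonoOn phiAux (Ioo (0:ℝ) 1) := by
  apply strictMonoOn_of_deriv_pos (convex_Ioo 0 1)
  · intro u hu
    exact (hasDerivAt_phiAux hu).continuousAt.continuousWithinAt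
  · intro u hu
    rw [interior_Ioo] at hu
    rw [(hasDerivAt_phiAux hu).deriv]
    obtain ⟨hu0, hu1⟩ := hu
    have h1 : (0:ℝ) < 1 - u ^ 2 := by nlinarith
    have hs0 : 0 < Real.sqrt (1 - u ^ 2) := Real.sqrt_pos.mpr h1
    have hsq : Real.sqrt (1 - u ^ 2) ^ 2 = 1 - u ^ 2 := Real.sq_sqrt h1.le
    have hs1 : Real.sqrt (1 - u ^ 2) < 1 := by nlinarith
    have key := two_mul_lt_log_sub hs0 hs1
    apply div_pos (by linarith) (by positivity)

lemma deriv_xiFn_eq {x : ℝ} (hx : x ∈ Ioo (0:ℝ) 1) : deriv xiFn x = phiAux x :=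
  (hasDerivAt_xiFn hx).deriv

lemma xiFn_convex_half : StrictConvexOn ℝ (Icc (0:ℝ) 1) xiFn := by
  apply StrictMonoOn.strictConvexOn_of_deriv (convex_Icc 0 1) continuous_xiFn.continuousOn
  rw [interior_Icc]
  intro a ha b hb hab
  rw [deriv_xiFn_eq ha, deriv_xiFn_eq hb]
  exact strictMonoOn_phiAux ha hb hab

lemma xiFn_mono : StrictMonoOn xiFn (Icc (0:ℝ) 1) := by
  apply strictMonoOn_of_deriv_pos (convex_Icc 0 1) continuous_xiFn.continuousOn
  intro u hu
  rw [interior_Icc] at hu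
  rw [deriv_xiFn_eq hu]
  exact phiAux_pos hu

lemma xiFn_abs (x : ℝ) : xiFn |x| = xiFn x := by
  rcases abs_cases x with ⟨h, _⟩ | ⟨h, _⟩
  · rw [h]
  · rw [h]
    have hsq : (-x) ^ 2 = x ^ 2 := by ring
    simp only [xiFn, hsq]

/-- The function ξ is strictly convex on [-1, 1]. -/
theorem xi_strictConvexOn : StrictConvexOn ℝ (Set.Icc (-1 : ℝ) 1) xiFn := by
  have hcx := xiFn_convex_half
  have hm := xiFn_mono
  refine ⟨convex_Icc _ _, ?_⟩
  intro x hx y hy hxy a b ha hb hab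
  simp only [smul_eq_mul]
  have hx1 : |x| ≤ 1 := abs_le.mpr ⟨hx.1, hx.2⟩
  have hy1 : |y| ≤ 1 := abs_le.mpr ⟨hy.1, hy.2⟩
  have hxm : |x| ∈ Icc (0:ℝ) 1 := ⟨abs_nonneg x, hx1⟩
  have hym : |y| ∈ Icc (0:ℝ) 1 := ⟨abs_nonneg y, hy1⟩
  have hcm : a * |x| + b * |y| ∈ Icc (0:ℝ) 1 := by
    constructor
    · positivity
    · nlinarith [abs_nonneg x, abs_nonneg y]
  have habs : |a * x + b * y| ≤ a * |x| + b * |y| := by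
    calc |a * x + b * y| ≤ |a * x| + |b * y| := abs_add_le _ _
      _ = a * |x| + b * |y| := by rw [abs_mul, abs_mul, abs_of_pos ha, abs_of_pos hb]
  have hmm : |a * x + b * y| ∈ Icc (0:ℝ) 1 := ⟨abs_nonneg _, habs.trans hcm.2⟩
  rw [← xiFn_abs (a * x + b * y), ← xiFn_abs x, ← xiFn_abs y]
  rcases eq_or_ne |x| |y| with he | he
  · have hyx : y = -x := by
      rcases abs_eq_abs.mp he with h | h
      · exact absurd h hxy
      · linarith
    have hx0 : x ≠ 0 := by
      rintro rfl
      apply hxy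
      rw [hyx]
      ring
    have hlt : |a * x + b * y| < |x| := by
      rw [hyx]
      have he2 : a * x + b * (-x) = (a - b) * x := by ring
      rw [he2, abs_mul]
      have h1 : |a - b| < 1 := abs_lt.mpr ⟨by linarith, by linarith⟩
      have h2 : 0 < |x| := abs_pos.mpr hx0
      nlinarith
    have hlt2 := hm hmm hxm hlt
    have hee : xiFn |y| = xiFn |x| := by rw [← he]
    rw [hee]
    have hsum : a * xiFn |x| + b * xiFn |x| = xiFn |x| := by
      rw [← add_mul, hab, one_mul]
    linarith
  · calc xiFn |a * x + b * y| ≤ xiFn (a * |x| + b * |y|) := hm.monotoneOn hmm hcm habs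
      _ < a * xiFn |x| + b * xiFn |y| := by
          simpa using hcx.2 hxm hym he ha hb hab
end

section
/- Let g be a continuous real-valued function on a compact set P of extreme points of a compact convex set Ω in a finite-dimensional real vector space, with Ω the convex hull of P. Then the largest convex extension G of g to Ω, G(ρ) = inf{ Σ pⱼ g(πⱼ) : ρ = Σ pⱼ πⱼ, πⱼ ∈ P, pⱼ ≥ 0, Σ pⱼ = 1 }, attains the infimum for every ρ ∈ Ω, i.e., G is a roof. -/
open scoped BigOperators

/-- The set of values `Σ pⱼ g(πⱼ)` over finite convex decompositions of `ρ`
    into elements of `P`. -/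
def decompVals {E : Type*} [AddCommGroup E] [Module ℝ E]
    (P : Set E) (g : E → ℝ) (ρ : E) : Set ℝ :=
  {t : ℝ | ∃ (k : ℕ) (p : Fin k → ℝ) (π : Fin k → E),
    (∀ j, 0 ≤ p j) ∧ (∑ j, p j = 1) ∧ (∀ j, π j ∈ P) ∧
    ρ = ∑ j, p j • π j ∧ t = ∑ j, p j * g (π j)}

/-- Summing an extension-by-zero over `Fin N` recovers the original sum. -/
lemma sum_extend_zero {M : Type*} [AddCommMonoid M] {m N : ℕ}
    {inj : Fin m → Fin N} (hinj : Function.Injective inj) (f : Fin m → M) :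
    ∑ j, Function.extend inj f 0 j = ∑ i, f i := by
  have h1 : ∑ j, Function.extend inj f 0 j
      = ∑ j ∈ Finset.univ.image inj, Function.extend inj f 0 j := by
    refine (Finset.sum_subset (Finset.subset_univ _) ?_).symm
    intro j _ hj
    rw [Function.extend_apply']
    · rfl
    · rintro ⟨i, rfl⟩
      exact hj (Finset.mem_image.mpr ⟨i, Finset.mem_univ i, rfl⟩)
  rw [h1, Finset.sum_image (fun a _ b _ h => hinj h)]
  exact Finset.sum_congr rfl fun i _ => hinj.extend_apply f 0 i

/-- Combining two extensions-by-default under a map killing `0`. -/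
lemma sum_extend_comb {E : Type*} {M : Type*} [AddCommMonoid M] {m N : ℕ}
    {inj : Fin m → Fin N} (hinj : Function.Injective inj)
    (a : Fin m → ℝ) (b : Fin m → E) (d : Fin N → E)
    (h : ℝ → E → M) (h0 : ∀ x, h 0 x = 0) :
    ∑ j, h (Function.extend inj a 0 j) (Function.extend inj b d j)
      = ∑ i, h (a i) (b i) := by
  have : ∀ j, h (Function.extend inj a 0 j) (Function.extend inj b d j)
      = Function.extend inj (fun i => h (a i) (b i)) 0 j := by
    intro j
    by_cases hj : ∃ i, inj i = j
    · obtain ⟨i, rfl⟩ := hj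
      rw [hinj.extend_apply, hinj.extend_apply, hinj.extend_apply]
    · rw [Function.extend_apply' _ _ _ hj, Function.extend_apply' _ _ _ hj,
        Function.extend_apply' _ _ _ hj]
      exact h0 _
  rw [Finset.sum_congr rfl fun j _ => this j, sum_extend_zero hinj]

/-- Pad a convex decomposition indexed by a fintype of cardinality `≤ N` to
    one indexed by `Fin N`. -/
lemma pad_decomp {E : Type*} [AddCommGroup E] [Module ℝ E]
    (P : Set E) (g : E → ℝ) (ρ : E) (N : ℕ) {ι : Type*} [Fintype ι]
    (hcard : Fintype.card ι ≤ N) {x₀ : E} (hx₀ : x₀ ∈ P)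
    (z : ι → E) (hz : ∀ i, z i ∈ P) (w : ι → ℝ) (hw0 : ∀ i, 0 ≤ w i)
    (hw1 : ∑ i, w i = 1) (hρ : ρ = ∑ i, w i • z i) (t : ℝ)
    (ht : t = ∑ i, w i * g (z i)) :
    ∃ (p : Fin N → ℝ) (π : Fin N → E),
      (∀ j, 0 ≤ p j) ∧ (∑ j, p j = 1) ∧ (∀ j, π j ∈ P) ∧
      ρ = ∑ j, p j • π j ∧ t = ∑ j, p j * g (π j) := by
  set m := Fintype.card ι with hm
  set e : Fin m ≃ ι := (Fintype.equivFin ι).symm with he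
  set inj : Fin m → Fin N := Fin.castLE hcard with hinjdef
  have hinj : Function.Injective inj := Fin.castLE_injective hcard
  set p : Fin N → ℝ := Function.extend inj (fun i => w (e i)) 0 with hp
  set π : Fin N → E := Function.extend inj (fun i => z (e i)) (fun _ => x₀) with hπ
  refine ⟨p, π, ?_, ?_, ?_, ?_, ?_⟩
  · intro j
    by_cases hj : ∃ i, inj i = j
    · obtain ⟨i, rfl⟩ := hj
      rw [hp, hinj.extend_apply]
      exact hw0 _
    · rw [hp, Function.extend_apply' _ _ _ hj]
      exact le_refl 0
  · have := sum_extend_comb (M := ℝ) hinj (fun i => w (e i)) (fun i => z (e i))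
      (fun _ => x₀) (fun a _ => a) (fun _ => rfl)
    have h' : ∑ j, p j = ∑ i, w (e i) := by simpa using this
    rw [h', ← hw1]
    exact e.sum_comp w
  · intro j
    by_cases hj : ∃ i, inj i = j
    · obtain ⟨i, rfl⟩ := hj
      rw [hπ, hinj.extend_apply]
      exact hz _
    · rw [hπ, Function.extend_apply' _ _ _ hj]
      exact hx₀
  · have := sum_extend_comb (M := E) hinj (fun i => w (e i)) (fun i => z (e i))
      (fun _ => x₀) (fun a x => a • x) (fun x => zero_smul ℝ x)
    have h' : ∑ j, p j • π j = ∑ i, w (e i) • z (e i) := by simpa using this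
    rw [h', hρ]
    exact (e.sum_comp fun i => w i • z i).symm
  · have := sum_extend_comb (M := ℝ) hinj (fun i => w (e i)) (fun i => z (e i))
      (fun _ => x₀) (fun a x => a * g x) (fun x => zero_mul _)
    have h' : ∑ j, p j * g (π j) = ∑ i, w (e i) * g (z (e i)) := by simpa using this
    rw [h', ht]
    exact (e.sum_comp fun i => w i * g (z i)).symm

/-- For a continuous `g` on a compact set `P` of extreme points of a compact
    convex set `Ω = convexHull P` in a finite-dimensional real vector space,
    the largest convex extension `G(ρ) = inf { Σ pⱼ g(πⱼ) }` attains its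
    infimum at every `ρ ∈ Ω`: `G` is a roof. -/
theorem convex_roof_attained {E : Type*} [NormedAddCommGroup E] [NormedSpace ℝ E]
    [FiniteDimensional ℝ E]
    (P Ω : Set E) (g : E → ℝ)
    (hPcomp : IsCompact P) (hg : ContinuousOn g P)
    (hΩ : Ω = convexHull ℝ P) (hΩcomp : IsCompact Ω) (hΩconv : Convex ℝ Ω)
    (hPext : P ⊆ Ω.extremePoints ℝ)
    (ρ : E) (hρ : ρ ∈ Ω) :
    sInf (decompVals P g ρ) ∈ decompVals P g ρ := by
  classical
  set n := Module.finrank ℝ E with hn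
  set N := n + 2 with hN
  -- P is nonempty
  have hPne : P.Nonempty := by
    rw [← convexHull_nonempty_iff (𝕜 := ℝ), ← hΩ]
    exact ⟨ρ, hρ⟩
  obtain ⟨x₀, hx₀⟩ := hPne
  -- the bounded-length decomposition set
  set K : Set ((Fin N → ℝ) × (Fin N → E)) :=
    (stdSimplex ℝ (Fin N) ×ˢ Set.univ.pi fun _ : Fin N => P) ∩
      {x | ρ = ∑ j, x.1 j • x.2 j} with hK
  have hKmem : ∀ x : (Fin N → ℝ) × (Fin N → E), x ∈ K ↔
      (∀ j, 0 ≤ x.1 j) ∧ (∑ j, x.1 j = 1) ∧ (∀ j, x.2 j ∈ P) ∧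
      ρ = ∑ j, x.1 j • x.2 j := by
    intro x
    simp only [hK, Set.mem_inter_iff, Set.mem_prod, Set.mem_pi, Set.mem_univ,
      forall_true_left, stdSimplex, Set.mem_setOf_eq]
    tauto
  set f : (Fin N → ℝ) × (Fin N → E) → ℝ := fun x => ∑ j, x.1 j * g (x.2 j) with hf
  -- K is compact
  have hKcomp : IsCompact K := by
    refine IsCompact.inter_right ?_ ?_
    · exact (isCompact_stdSimplex (𝕜 := ℝ) (ι := Fin N)).prod (isCompact_univ_pi fun _ => hPcomp)
    · have : Continuous fun x : (Fin N → ℝ) × (Fin N → E) => ∑ j, x.1 j • x.2 j := by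
        refine continuous_finset_sum _ fun j _ => ?_
        exact ((continuous_apply j).comp continuous_fst).smul
          ((continuous_apply j).comp continuous_snd)
      exact isClosed_eq continuous_const this
  -- f is continuous on K
  have hfcont : ContinuousOn f K := by
    refine continuousOn_finset_sum _ fun j _ => ?_
    refine ContinuousOn.mul (((continuous_apply j).comp continuous_fst).continuousOn) ?_
    refine hg.comp (((continuous_apply j).comp continuous_snd).continuousOn) ?_
    intro x hx
    exact ((hKmem x).mp hx).2.2.1 j
  -- every element of decompVals is achieved by a bounded-length decomposition
  have hsub : decompVals P g ρ ⊆ f '' K := by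
    rintro t ⟨k, p, π, hp0, hp1, hπP, hρd, htd⟩
    -- (ρ, t) lies in the convex hull of the graph of g over P
    set graph : Set (E × ℝ) := (fun x => (x, g x)) '' P with hgraph
    have hmem : (ρ, t) ∈ convexHull ℝ graph := by
      have : (ρ, t) = ∑ j, p j • (π j, g (π j)) := by
        refine Prod.ext ?_ ?_
        · rw [Prod.fst_sum]; simpa using hρd
        · rw [Prod.snd_sum]; simpa [smul_eq_mul] using htd
      rw [this]
      refine (convex_convexHull ℝ graph).sum_mem (fun j _ => hp0 j) hp1 fun j _ => ?_
      exact subset_convexHull ℝ graph ⟨π j, hπP j, rfl⟩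
    obtain ⟨ι, hι, z, w, hzr, hzai, hw0, hw1, hwz⟩ :=
      eq_pos_convex_span_of_mem_convexHull hmem
    -- cardinality bound from affine independence
    have hcard : Fintype.card ι ≤ N := by
      have h1 := hzai.card_le_finrank_succ
      have h2 : Module.finrank ℝ (vectorSpan ℝ (Set.range z)) ≤ Module.finrank ℝ (E × ℝ) :=
        Submodule.finrank_le _
      have h3 : Module.finrank ℝ (E × ℝ) = n + 1 := by
        rw [Module.finrank_prod, hn, Module.finrank_self]
      omega
    -- first components give a decomposition of ρ with value t
    have hz1 : ∀ i, (z i).1 ∈ P ∧ (z i).2 = g ((z i).1) := by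
      intro i
      obtain ⟨x, hxP, hx⟩ := hzr (Set.mem_range_self i)
      rw [← hx]
      exact ⟨hxP, rfl⟩
    have hρ' : ρ = ∑ i, w i • (z i).1 := by
      have := congrArg Prod.fst hwz
      rw [Prod.fst_sum] at this
      simpa using this.symm
    have ht' : t = ∑ i, w i * g ((z i).1) := by
      have := congrArg Prod.snd hwz
      rw [Prod.snd_sum] at this
      simp only [Prod.smul_snd, smul_eq_mul] at this
      rw [← this]
      exact Finset.sum_congr rfl fun i _ => by rw [(hz1 i).2]
    obtain ⟨p', π', h1, h2, h3, h4, h5⟩ :=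
      pad_decomp P g ρ N hcard hx₀ (fun i => (z i).1) (fun i => (hz1 i).1) w
        (fun i => (hw0 i).le) hw1 hρ' t ht'
    exact ⟨(p', π'), (hKmem _).mpr ⟨h1, h2, h3, h4⟩, h5.symm⟩
  have hsup : f '' K ⊆ decompVals P g ρ := by
    rintro t ⟨x, hx, rfl⟩
    obtain ⟨h1, h2, h3, h4⟩ := (hKmem x).mp hx
    exact ⟨N, x.1, x.2, h1, h2, h3, h4, rfl⟩
  have heq : decompVals P g ρ = f '' K := Set.Subset.antisymm hsub hsup
  -- decompVals is nonempty
  have hne : (decompVals P g ρ).Nonempty := by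
    rw [hΩ] at hρ
    obtain ⟨ι, hι, z, w, hzr, hzai, hw0, hw1, hwz⟩ :=
      eq_pos_convex_span_of_mem_convexHull hρ
    have hcard : Fintype.card ι ≤ N := by
      have h1 := hzai.card_le_finrank_succ
      have h2 : Module.finrank ℝ (vectorSpan ℝ (Set.range z)) ≤ n :=
        hn ▸ Submodule.finrank_le _
      omega
    obtain ⟨p', π', h1, h2, h3, h4, h5⟩ :=
      pad_decomp P g ρ N hcard hx₀ z (fun i => hzr (Set.mem_range_self i)) w
        (fun i => (hw0 i).le) hw1 hwz.symm _ rfl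
    exact ⟨_, N, p', π', h1, h2, h3, h4, h5⟩
  rw [heq] at hne ⊢
  exact (hKcomp.image_of_continuousOn hfcont).sInf_mem hne
end

section
/- Let Q₀ be real symmetric 4×4, η = diag(1,-1,-1,-1), and suppose w₁ > w₂ are real numbers such that Q_{w₁} = Q₀ - w₁η and Q_{w₂} = Q₀ - w₂η are both positive semidefinite with nontrivial kernels. Then any nonzero n₁ ∈ Ker Q_{w₁} is timelike (n₁ᵀηn₁ > 0) and any nonzero n₂ ∈ Ker Q_{w₂} is spacelike (n₂ᵀηn₂ < 0). -/
open Matrix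

lemma eta_mul_self (η : Matrix (Fin 4) (Fin 4) ℝ)
    (hη : η = Matrix.diagonal ![1, -1, -1, -1]) : η * η = 1 := by
  subst hη
  ext i j
  fin_cases i <;> fin_cases j <;> simp [Matrix.mul_apply, Fin.sum_univ_four]

lemma quad_expand (Q0 η : Matrix (Fin 4) (Fin 4) ℝ) (w : ℝ) (n : Fin 4 → ℝ) :
    n ⬝ᵥ (Q0 - w • η) *ᵥ n = n ⬝ᵥ Q0 *ᵥ n - w * (n ⬝ᵥ η *ᵥ n) := by
  rw [Matrix.sub_mulVec, dotProduct_sub, Matrix.smul_mulVec, dotProduct_smul,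
    smul_eq_mul]

/-- If `Q₀ - w₁η` and `Q₀ - w₂η` (w₁ > w₂) are both positive semidefinite with
    nontrivial kernels, then kernel vectors at `w₁` are timelike and kernel
    vectors at `w₂` are spacelike. -/
theorem kernel_timelike_spacelike (Q0 η : Matrix (Fin 4) (Fin 4) ℝ)
    (hsym : Q0.IsSymm)
    (hη : η = Matrix.diagonal ![1, -1, -1, -1])
    (w₁ w₂ : ℝ) (hw : w₂ < w₁)
    (h1 : (Q0 - w₁ • η).PosSemidef) (h2 : (Q0 - w₂ • η).PosSemidef)
    (n₁ n₂ : Fin 4 → ℝ) (hn₁ : n₁ ≠ 0) (hn₂ : n₂ ≠ 0)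
    (hk1 : (Q0 - w₁ • η).mulVec n₁ = 0) (hk2 : (Q0 - w₂ • η).mulVec n₂ = 0) :
    0 < n₁ ⬝ᵥ η.mulVec n₁ ∧ n₂ ⬝ᵥ η.mulVec n₂ < 0 := by
  have hηη := eta_mul_self η hη
  -- common kernel is trivial
  have hcommon : ∀ n : Fin 4 → ℝ, (Q0 - w₁ • η) *ᵥ n = 0 → (Q0 - w₂ • η) *ᵥ n = 0 → n = 0 := by
    intro n ha hb
    have hsub : ((Q0 - w₂ • η) - (Q0 - w₁ • η)) *ᵥ n = 0 := by
      rw [Matrix.sub_mulVec, ha, hb, sub_zero]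
    have : ((w₁ - w₂) • η) *ᵥ n = 0 := by
      have : (Q0 - w₂ • η) - (Q0 - w₁ • η) = (w₁ - w₂) • η := by
        ext i j; simp [Matrix.sub_apply, Matrix.smul_apply]; ring
      rwa [this] at hsub
    have hηn : η *ᵥ n = 0 := by
      rw [Matrix.smul_mulVec] at this
      have := smul_eq_zero.mp this
      rcases this with h | h
      · exact absurd h (sub_pos.mpr hw).ne'
      · exact h
    have : n = (η * η) *ᵥ n := by rw [hηη, Matrix.one_mulVec]
    rw [← Matrix.mulVec_mulVec, hηn, Matrix.mulVec_zero] at this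
    exact this
  have key : ∀ (n : Fin 4 → ℝ), n ≠ 0 → (Q0 - w₁ • η) *ᵥ n = 0 →
      0 < (w₁ - w₂) * (n ⬝ᵥ η *ᵥ n) := by
    intro n hn hk
    have hz : n ⬝ᵥ (Q0 - w₁ • η) *ᵥ n = 0 := by rw [hk, dotProduct_zero]
    have hnn : 0 ≤ n ⬝ᵥ (Q0 - w₂ • η) *ᵥ n := by
      have := h2.dotProduct_mulVec_nonneg n; simpa using this
    have hexp : n ⬝ᵥ (Q0 - w₂ • η) *ᵥ n = (w₁ - w₂) * (n ⬝ᵥ η *ᵥ n) := by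
      rw [quad_expand] at hz ⊢
      have : n ⬝ᵥ Q0 *ᵥ n = w₁ * (n ⬝ᵥ η *ᵥ n) := by linarith
      rw [this]; ring
    rw [hexp] at hnn
    rcases lt_or_eq_of_le hnn with h | h
    · exact h
    · exfalso
      have hq2 : n ⬝ᵥ (Q0 - w₂ • η) *ᵥ n = 0 := by rw [hexp, ← h]
      have : (Q0 - w₂ • η) *ᵥ n = 0 := by
        have := (h2.dotProduct_mulVec_zero_iff n).mp (by simpa using hq2)
        exact this
      exact hn (hcommon n hk this)
  have key2 : ∀ (n : Fin 4 → ℝ), n ≠ 0 → (Q0 - w₂ • η) *ᵥ n = 0 →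
      (w₁ - w₂) * (n ⬝ᵥ η *ᵥ n) < 0 := by
    intro n hn hk
    have hz : n ⬝ᵥ (Q0 - w₂ • η) *ᵥ n = 0 := by rw [hk, dotProduct_zero]
    have hnn : 0 ≤ n ⬝ᵥ (Q0 - w₁ • η) *ᵥ n := by
      have := h1.dotProduct_mulVec_nonneg n; simpa using this
    have hexp : n ⬝ᵥ (Q0 - w₁ • η) *ᵥ n = -((w₁ - w₂) * (n ⬝ᵥ η *ᵥ n)) := by
      rw [quad_expand] at hz ⊢
      have : n ⬝ᵥ Q0 *ᵥ n = w₂ * (n ⬝ᵥ η *ᵥ n) := by linarith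
      rw [this]; ring
    rw [hexp] at hnn
    rcases lt_or_eq_of_le hnn with h | h
    · linarith
    · exfalso
      have hq1 : n ⬝ᵥ (Q0 - w₁ • η) *ᵥ n = 0 := by rw [hexp]; linarith
      have : (Q0 - w₁ • η) *ᵥ n = 0 := by
        have := (h1.dotProduct_mulVec_zero_iff n).mp (by simpa using hq1)
        exact this
      exact hn (hcommon n this hk)
  have hw' : 0 < w₁ - w₂ := sub_pos.mpr hw
  constructor
  · have := key n₁ hn₁ hk1
    nlinarith
  · have := key2 n₂ hn₂ hk2
    nlinarith
end

section
/- For the bistochastic 1-qubit map Φ defined on the Bloch-vector representation by (x₀, x₁, x₂, x₃) ↦ (x₀, λ₁x₁, λ₂x₂, λ₃x₃), with w = max(λ₁², λ₂², λ₃²) and |λᵢ| ≤ 1, the quadratic form q(x) = (1-w)x₀² + Σᵢ(w - λᵢ²)xᵢ² is positive semidefinite, agrees with 4·det(Φ(ρ)) on the set of pure states (x₀ = 1, x₁²+x₂²+x₃² = 1), and its square root √q is constant along the coordinate direction achieving the maximum, hence √q restricted to the Bloch ball is a flat convex roof. -/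
/-- For the bistochastic qubit map `x ↦ (x₀, λ₁x₁, λ₂x₂, λ₃x₃)` with
    `w = max λᵢ²`, the quadratic form
    `q(x) = (1-w)x₀² + Σ (w-λᵢ²)xᵢ²` is positive semidefinite, agrees with
    `4·det Φ(ρ) = x₀² - Σ λᵢ²xᵢ²` on pure states, is constant along the
    coordinate direction achieving the maximum, and `√q` is convex on the
    Bloch ball: a flat convex roof. -/
theorem bistochastic_concurrence (l : Fin 3 → ℝ) (hl : ∀ i, |l i| ≤ 1)
    (w : ℝ) (hw : w = max ((l 0) ^ 2) (max ((l 1) ^ 2) ((l 2) ^ 2)))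
    (q : (Fin 4 → ℝ) → ℝ)
    (hq : q = fun x => (1 - w) * (x 0) ^ 2 + (w - (l 0) ^ 2) * (x 1) ^ 2
      + (w - (l 1) ^ 2) * (x 2) ^ 2 + (w - (l 2) ^ 2) * (x 3) ^ 2) :
    (∀ x, 0 ≤ q x) ∧
    (∀ x : Fin 4 → ℝ, x 0 = 1 → (x 1) ^ 2 + (x 2) ^ 2 + (x 3) ^ 2 = 1 →
      q x = (x 0) ^ 2 - (l 0) ^ 2 * (x 1) ^ 2 - (l 1) ^ 2 * (x 2) ^ 2
        - (l 2) ^ 2 * (x 3) ^ 2) ∧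
    (∃ i : Fin 3, w = (l i) ^ 2 ∧
      ∀ (x : Fin 4 → ℝ) (t : ℝ), q (x + t • (Pi.single i.succ 1 : Fin 4 → ℝ)) = q x) ∧
    ConvexOn ℝ {x : Fin 4 → ℝ | x 0 = 1 ∧ (x 1) ^ 2 + (x 2) ^ 2 + (x 3) ^ 2 ≤ 1}
      (fun x => Real.sqrt (q x)) := by
  have hsq : ∀ i : Fin 3, (l i) ^ 2 ≤ 1 := by
    intro i
    calc (l i) ^ 2 = |l i| ^ 2 := (sq_abs _).symm
    _ ≤ 1 := pow_le_one₀ (abs_nonneg _) (hl i)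
  have hw1 : w ≤ 1 := by
    rw [hw]; exact max_le (hsq 0) (max_le (hsq 1) (hsq 2))
  have hwi : ∀ i : Fin 3, (l i) ^ 2 ≤ w := by
    intro i
    fin_cases i
    · rw [hw]; exact le_max_left _ _
    · rw [hw]; exact le_max_of_le_right (le_max_left _ _)
    · rw [hw]; exact le_max_of_le_right (le_max_right _ _)
  have h0 : 0 ≤ 1 - w := by linarith
  have h1 : 0 ≤ w - (l 0) ^ 2 := by linarith [hwi 0]
  have h2 : 0 ≤ w - (l 1) ^ 2 := by linarith [hwi 1]
  have h3 : 0 ≤ w - (l 2) ^ 2 := by linarith [hwi 2]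
  have hqnn : ∀ x, 0 ≤ q x := by
    intro x
    rw [hq]
    exact add_nonneg (add_nonneg (add_nonneg (mul_nonneg h0 (sq_nonneg _))
      (mul_nonneg h1 (sq_nonneg _))) (mul_nonneg h2 (sq_nonneg _)))
      (mul_nonneg h3 (sq_nonneg _))
  refine ⟨hqnn, ?_, ?_, ?_⟩
  · intro x hx0 hxs
    rw [hq]
    simp only
    linear_combination w * hxs - w * (x 0 + 1) * hx0
  · -- existence of flat direction
    have hcases : w = (l 0) ^ 2 ∨ w = (l 1) ^ 2 ∨ w = (l 2) ^ 2 := by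
      rw [hw]
      rcases le_total ((l 0) ^ 2) (max ((l 1) ^ 2) ((l 2) ^ 2)) with h | h
      · rcases le_total ((l 1) ^ 2) ((l 2) ^ 2) with h' | h'
        · right; right; rw [max_eq_right h, max_eq_right h']
        · right; left; rw [max_eq_right h, max_eq_left h']
      · left; rw [max_eq_left h]
    have psingle : ∀ (k j : Fin 4), (Pi.single k 1 : Fin 4 → ℝ) j = if j = k then 1 else 0 := by
      intro k j
      rw [Pi.single_apply]
    rcases hcases with h | h | h
    · refine ⟨0, h, fun x t => ?_⟩
      rw [hq]
      have hs : ((0 : Fin 3).succ : Fin 4) = 1 := rfl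
      simp only [hs, Pi.add_apply, Pi.smul_apply, smul_eq_mul, psingle]
      simp only [Fin.reduceEq, reduceIte]
      rw [h]; ring
    · refine ⟨1, h, fun x t => ?_⟩
      rw [hq]
      have hs : ((1 : Fin 3).succ : Fin 4) = 2 := rfl
      simp only [hs, Pi.add_apply, Pi.smul_apply, smul_eq_mul, psingle]
      simp only [Fin.reduceEq, reduceIte]
      rw [h]; ring
    · refine ⟨2, h, fun x t => ?_⟩
      rw [hq]
      have hs : ((2 : Fin 3).succ : Fin 4) = 3 := rfl
      simp only [hs, Pi.add_apply, Pi.smul_apply, smul_eq_mul, psingle]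
      simp only [Fin.reduceEq, reduceIte]
      rw [h]; ring
  · -- convexity of sqrt ∘ q
    set c : Fin 4 → ℝ := ![Real.sqrt (1 - w), Real.sqrt (w - (l 0) ^ 2),
      Real.sqrt (w - (l 1) ^ 2), Real.sqrt (w - (l 2) ^ 2)] with hc
    set L : (Fin 4 → ℝ) → EuclideanSpace ℝ (Fin 4) := fun z => WithLp.toLp 2 (fun j => c j * z j) with hL
    have hnorm : ∀ x, Real.sqrt (q x) = ‖L x‖ := by
      intro x
      rw [EuclideanSpace.norm_eq]
      congr 1
      rw [hq, Fin.sum_univ_four]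
      simp only [hL, hc, PiLp.toLp_apply, Real.norm_eq_abs, sq_abs, Matrix.cons_val_zero, Matrix.cons_val_one,
        Matrix.head_cons, Matrix.cons_val_two, Matrix.tail_cons, Matrix.cons_val_three]
      rw [mul_pow, mul_pow, mul_pow, mul_pow,
        Real.sq_sqrt h0, Real.sq_sqrt h1, Real.sq_sqrt h2, Real.sq_sqrt h3]
    simp only [hnorm]
    constructor
    · -- convexity of the set
      intro x hx y hy s t hs ht hst
      refine ⟨?_, ?_⟩
      · simp only [Pi.add_apply, Pi.smul_apply, smul_eq_mul, hx.1, hy.1]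
        linarith
      · simp only [Pi.add_apply, Pi.smul_apply, smul_eq_mul]
        nlinarith [mul_nonneg (mul_nonneg hs ht) (sq_nonneg (x 1 - y 1)),
          mul_nonneg (mul_nonneg hs ht) (sq_nonneg (x 2 - y 2)),
          mul_nonneg (mul_nonneg hs ht) (sq_nonneg (x 3 - y 3)),
          mul_nonneg hs (sub_nonneg.2 hx.2), mul_nonneg ht (sub_nonneg.2 hy.2)]
    · intro x _ y _ s t hs ht hst
      have hLlin : L (s • x + t • y) = s • L x + t • L y := by
        ext j
        simp only [hL, PiLp.toLp_apply, PiLp.add_apply, PiLp.smul_apply, Pi.add_apply, Pi.smul_apply, smul_eq_mul]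
        show c j * (s * x j + t * y j) = s * (c j * x j) + t * (c j * y j)
        ring
      calc ‖L (s • x + t • y)‖ = ‖s • L x + t • L y‖ := by rw [hLlin]
      _ ≤ ‖s • L x‖ + ‖t • L y‖ := norm_add_le _ _
      _ = s * ‖L x‖ + t * ‖L y‖ := by
          rw [norm_smul, norm_smul, Real.norm_eq_abs, Real.norm_eq_abs,
            abs_of_nonneg hs, abs_of_nonneg ht]
      _ = s • ‖L x‖ + t • ‖L y‖ := by simp
end

section
/- For the axially symmetric map with parameters α, γ ∈ [0,1], at the critical value β_c² = 1 + 2αγ - α - γ - 2√(α(1-α)γ(1-γ)), the function ρ ↦ 2√(det Φ(ρ) - β_c² det ρ) is affine on the Bloch ball: on pure states (1, x⃗), |x⃗| = 1, it equals (√(α(1-α)) - √(γ(1-γ)))·x₃ + √(α(1-α)) + √(γ(1-γ)). -/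
/-- At the critical value β_c² = 1 + 2αγ - α - γ - 2√(α(1-α)γ(1-γ)), on pure
    states (x₀² = x₁²+x₂²+x₃²) the quantity 4(det Φ(x) - β_c² det x) is the
    square of the affine function (√(α(1-α)) - √(γ(1-γ)))x₃ + (√(α(1-α)) +
    √(γ(1-γ)))x₀. -/
theorem axial_critical_affine (α γ : ℝ)
    (hα : α ∈ Set.Icc (0 : ℝ) 1) (hγ : γ ∈ Set.Icc (0 : ℝ) 1)
    (a g βc2 : ℝ)
    (ha : a = Real.sqrt (α * (1 - α))) (hg : g = Real.sqrt (γ * (1 - γ)))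
    (hβ : βc2 = 1 + 2 * α * γ - α - γ - 2 * Real.sqrt (α * (1 - α) * γ * (1 - γ)))
    (x0 x1 x2 x3 : ℝ) (hpure : x0 ^ 2 = x1 ^ 2 + x2 ^ 2 + x3 ^ 2) :
    x0 ^ 2 - βc2 * x1 ^ 2 - βc2 * x2 ^ 2 - ((α + γ - 1) * x3 + (α - γ) * x0) ^ 2
      - βc2 * (x0 ^ 2 - x1 ^ 2 - x2 ^ 2 - x3 ^ 2)
    = ((a - g) * x3 + (a + g) * x0) ^ 2 := by
  obtain ⟨hα0, hα1⟩ := hα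
  obtain ⟨hγ0, hγ1⟩ := hγ
  have hA : (0:ℝ) ≤ α * (1 - α) := mul_nonneg hα0 (by linarith)
  have hG : (0:ℝ) ≤ γ * (1 - γ) := mul_nonneg hγ0 (by linarith)
  have ha2 : a ^ 2 = α * (1 - α) := by rw [ha, Real.sq_sqrt hA]
  have hg2 : g ^ 2 = γ * (1 - γ) := by rw [hg, Real.sq_sqrt hG]
  have hprod : Real.sqrt (α * (1 - α) * γ * (1 - γ)) = a * g := by
    rw [ha, hg, ← Real.sqrt_mul hA]; ring_nf
  rw [hprod] at hβ
  linear_combination (x3 ^ 2 - x0 ^ 2 - (x0 ^ 2 - x1 ^ 2 - x2 ^ 2 - x3 ^ 2)) * hβ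
    + (-x0 ^ 2 - x3 ^ 2 - 2 * x0 * x3) * ha2 + (-x0 ^ 2 - x3 ^ 2 + 2 * x0 * x3) * hg2
    + (βc2 - 1 - 2 * α * γ + α + γ + 2 * a * g) * hpure
end

section
/- Let Φ be a trace-preserving positive linear map from 2×2 Hermitian matrices to 2×2 Hermitian matrices and let w₀ ∈ ℝ be such that q(ρ) = 4(det Φ(ρ) - w₀·det ρ) is a positive semidefinite quadratic form on the 4-dimensional real space of Hermitian matrices with nontrivial kernel containing a vector n with n·n ≤ 0 in the Minkowski sense. Then C(ρ) = √(q(ρ)) restricted to the Bloch ball satisfies: C(π) = 2√(det Φ(π)) for all pure states π, C is convex, and for every density matrix ρ there exists a convex decomposition ρ = Σ pⱼπⱼ into pure states with C(ρ) = Σ pⱼ C(πⱼ). -/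
open scoped BigOperators

lemma aux_root_neg (A b X s r : ℝ) (hA : 0 ≤ A) (hX : X < 1)
    (hr : A*r^2 + 2*b*r + (X-1) = 0)
    (hs : 0 < A*s^2 + 2*b*s + (X-1)) (hs0 : s < 0) (hrs : r ≤ s) : False := by
  have hid : r * (A*s^2+2*b*s+(X-1)) =
      s * (A*r^2+2*b*r+(X-1)) + (r - s)*(X-1) + A*s*r*(s - r) := by ring
  rw [hr, mul_zero, zero_add] at hid
  have h1 : 0 ≤ (r - s)*(X-1) := by nlinarith
  have h2 : 0 ≤ A*s*r*(s - r) := by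
    have hsr : 0 ≤ s*r := by nlinarith
    have : 0 ≤ A*(s*r) := mul_nonneg hA hsr
    nlinarith
  have h3 : r * (A*s^2+2*b*s+(X-1)) < 0 :=
    mul_neg_of_neg_of_pos (by linarith) hs
  linarith

lemma aux_root_pos (A b X s r : ℝ) (hA : 0 ≤ A) (hX : X < 1)
    (hr : A*r^2 + 2*b*r + (X-1) = 0)
    (hs : 0 < A*s^2 + 2*b*s + (X-1)) (hs0 : 0 < s) (hrs : s ≤ r) : False := by
  apply aux_root_neg A (-b) X (-s) (-r) hA hX (by nlinarith) (by nlinarith) (by linarith) (by linarith)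

lemma aux_fpos (S N X c : ℝ) (hS : S^2 ≤ X*N) (hc : c^2 ≤ N) (hX0 : 0 ≤ X)
    (hX1 : X < 1) (hN : 0 < N) : 0 < N + X*c^2 - 2*S*c := by
  by_cases h : N = S*c
  · exfalso
    nlinarith [mul_le_mul_of_nonneg_right hS (sq_nonneg c),
      mul_le_mul_of_nonneg_left hc (mul_nonneg hX0 hN.le),
      mul_lt_mul_of_pos_right (show X*N < N by nlinarith) hN, sq_nonneg (N - S*c)]
  · have h1 : 0 < (N - S*c)^2 := by
      have := sub_ne_zero.2 h
      positivity
    nlinarith [mul_nonneg (sq_nonneg c) (sub_nonneg.2 hS)]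

noncomputable def mdet (x : Fin 4 → ℝ) : ℝ :=
  (1 / 4) * ((x 0) ^ 2 - (x 1) ^ 2 - (x 2) ^ 2 - (x 3) ^ 2)

set_option maxHeartbeats 2000000 in
/-- Let `L` be a trace-preserving positive linear map on qubit observables (in
    Bloch coordinates) and let `w₀` be such that `q(x) = 4(det L(x) - w₀ det x)`
    is a positive semidefinite quadratic form whose kernel contains a vector `n`
    with `n·n ≤ 0` in the Minkowski sense. Then `C = √q` restricted to the Bloch
    ball equals `2√(det L(π))` on pure states, is convex, and every state admits
    an optimal convex decomposition into pure states on which `C` is convexly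
    linear: `C` is the convex roof of the concurrence. -/
theorem stochastic_qubit_concurrence
    (L : (Fin 4 → ℝ) →ₗ[ℝ] (Fin 4 → ℝ))
    (htp : ∀ x, (L x) 0 = x 0)
    (hpos : ∀ x, 0 ≤ x 0 → 0 ≤ mdet x → 0 ≤ (L x) 0 ∧ 0 ≤ mdet (L x))
    (w₀ : ℝ) (q : (Fin 4 → ℝ) → ℝ)
    (hq : q = fun x => 4 * (mdet (L x) - w₀ * mdet x))
    (hqpos : ∀ x, 0 ≤ q x)
    (n : Fin 4 → ℝ) (hn : n ≠ 0)
    (hker : ∀ (x : Fin 4 → ℝ) (t : ℝ), q (x + t • n) = q x)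
    (hnn : (n 0) ^ 2 - (n 1) ^ 2 - (n 2) ^ 2 - (n 3) ^ 2 ≤ 0) :
    (∀ x : Fin 4 → ℝ, x 0 = 1 → (x 1) ^ 2 + (x 2) ^ 2 + (x 3) ^ 2 = 1 →
      Real.sqrt (q x) = 2 * Real.sqrt (mdet (L x))) ∧
    ConvexOn ℝ {x : Fin 4 → ℝ | x 0 = 1 ∧ (x 1) ^ 2 + (x 2) ^ 2 + (x 3) ^ 2 ≤ 1}
      (fun x => Real.sqrt (q x)) ∧
    (∀ x : Fin 4 → ℝ, x 0 = 1 → (x 1) ^ 2 + (x 2) ^ 2 + (x 3) ^ 2 ≤ 1 →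
      ∃ (k : ℕ) (p : Fin k → ℝ) (π : Fin k → (Fin 4 → ℝ)),
        (∀ j, 0 ≤ p j) ∧ (∑ j, p j = 1) ∧
        (∀ j, (π j) 0 = 1 ∧ ((π j) 1) ^ 2 + ((π j) 2) ^ 2 + ((π j) 3) ^ 2 = 1) ∧
        x = ∑ j, p j • π j ∧
        Real.sqrt (q x) = ∑ j, p j * Real.sqrt (q (π j))) := by
  classical
  set B : (Fin 4 → ℝ) → (Fin 4 → ℝ) → ℝ := fun x y =>
    ((L x 0)*(L y 0) - (L x 1)*(L y 1) - (L x 2)*(L y 2) - (L x 3)*(L y 3))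
      - w₀ * ((x 0)*(y 0) - (x 1)*(y 1) - (x 2)*(y 2) - (x 3)*(y 3)) with hB
  have hLadd : ∀ (x y : Fin 4 → ℝ) (t : ℝ) (i : Fin 4),
      L (x + t • y) i = L x i + t * L y i := by
    intro x y t i
    rw [map_add, map_smul]
    simp [Pi.add_apply, Pi.smul_apply]
  have hexp : ∀ (x y : Fin 4 → ℝ) (t : ℝ),
      q (x + t • y) = q x + 2*t*(B x y) + t^2 * q y := by
    intro x y t
    simp only [hq, hB, mdet, hLadd, Pi.add_apply, Pi.smul_apply, smul_eq_mul]
    ring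
  have hqsmul : ∀ (s : ℝ) (z : Fin 4 → ℝ), q (s • z) = s^2 * q z := by
    intro s z
    simp only [hq, mdet, map_smul, Pi.smul_apply, smul_eq_mul]
    ring
  have hCS : ∀ x y, (B x y)^2 ≤ q x * q y := by
    intro x y
    have h : ∀ t : ℝ, 0 ≤ q y * (t*t) + (2 * B x y) * t + q x := by
      intro t
      have := hqpos (x + t • y)
      rw [hexp] at this
      nlinarith [this]
    have := discrim_le_zero h
    rw [discrim] at this
    nlinarith [this]
  have hsub : ∀ x y, Real.sqrt (q (x + y)) ≤ Real.sqrt (q x) + Real.sqrt (q y) := by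
    intro x y
    have hBle : B x y ≤ Real.sqrt (q x) * Real.sqrt (q y) := by
      have h1 : B x y ≤ |B x y| := le_abs_self _
      have h2 : |B x y| = Real.sqrt ((B x y)^2) := (Real.sqrt_sq_eq_abs _).symm
      have h3 : Real.sqrt ((B x y)^2) ≤ Real.sqrt (q x * q y) :=
        Real.sqrt_le_sqrt (hCS x y)
      rw [Real.sqrt_mul (hqpos x)] at h3
      linarith
    have hqe : q (x + y) = q x + 2 * B x y + q y := by
      have := hexp x y 1
      simpa using this
    have hle : q (x + y) ≤ (Real.sqrt (q x) + Real.sqrt (q y))^2 := by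
      rw [hqe]
      nlinarith [Real.sq_sqrt (hqpos x), Real.sq_sqrt (hqpos y)]
    calc Real.sqrt (q (x+y)) ≤ Real.sqrt ((Real.sqrt (q x) + Real.sqrt (q y))^2) :=
          Real.sqrt_le_sqrt hle
      _ = Real.sqrt (q x) + Real.sqrt (q y) := Real.sqrt_sq
          (add_nonneg (Real.sqrt_nonneg _) (Real.sqrt_nonneg _))
  have hsmul_sqrt : ∀ (a : ℝ) (z : Fin 4 → ℝ), 0 ≤ a →
      Real.sqrt (q (a • z)) = a * Real.sqrt (q z) := by
    intro a z ha
    rw [hqsmul, Real.sqrt_mul (sq_nonneg a), Real.sqrt_sq ha]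
  refine ⟨?_, ?_, ?_⟩
  · -- Part 1
    intro x hx0 hx1
    have hm : mdet x = 0 := by
      rw [mdet, hx0]; nlinarith
    have : q x = 2^2 * mdet (L x) := by rw [hq]; simp only []; rw [hm]; ring
    rw [this, Real.sqrt_mul (by norm_num : (0:ℝ) ≤ 2^2), Real.sqrt_sq (by norm_num : (0:ℝ) ≤ 2)]
  · -- Part 2
    constructor
    · intro u hu v hv a b ha hb hab
      obtain ⟨hu0, hu1⟩ := hu
      obtain ⟨hv0, hv1⟩ := hv
      constructor
      · simp only [Pi.add_apply, Pi.smul_apply, smul_eq_mul]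
        rw [hu0, hv0]; linarith
      · simp only [Pi.add_apply, Pi.smul_apply, smul_eq_mul]
        have e1 : 0 ≤ a*b*((u 1 - v 1)^2 + (u 2 - v 2)^2 + (u 3 - v 3)^2) := by positivity
        nlinarith [e1, mul_le_mul_of_nonneg_left hu1 ha, mul_le_mul_of_nonneg_left hv1 hb]
    · intro u hu v hv a b ha hb hab
      calc Real.sqrt (q (a • u + b • v))
          ≤ Real.sqrt (q (a • u)) + Real.sqrt (q (b • v)) := hsub _ _
        _ = a * Real.sqrt (q u) + b * Real.sqrt (q v) := by
            rw [hsmul_sqrt a u ha, hsmul_sqrt b v hb]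
  · -- Part 3
    intro x hx0 hxball
    by_cases hpure : (x 1) ^ 2 + (x 2) ^ 2 + (x 3) ^ 2 = 1
    · refine ⟨1, fun _ => 1, fun _ => x, fun j => zero_le_one, by simp, fun j => ⟨hx0, hpure⟩, ?_, by simp⟩
      simp
    -- non-pure case
    have hq0 : q 0 = 0 := by
      rw [hq]; simp [mdet]
    have hqn : q n = 0 := by
      have := hker 0 1
      simpa [hq0] using this
    set X := (x 1) ^ 2 + (x 2) ^ 2 + (x 3) ^ 2 with hXd
    set c := n 0 with hcd
    set S := x 1 * n 1 + x 2 * n 2 + x 3 * n 3 with hSd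
    set N := (n 1)^2 + (n 2)^2 + (n 3)^2 with hNd
    set A := N - c^2 with hAd
    have hX : X < 1 := lt_of_le_of_ne hxball hpure
    have hX0 : 0 ≤ X := by rw [hXd]; positivity
    have hNc : c^2 ≤ N := by
      rw [hNd, hcd]; nlinarith [hnn]
    have hN : 0 < N := by
      rcases lt_or_eq_of_le (show 0 ≤ N by rw [hNd]; positivity) with h | h
      · exact h
      · exfalso; apply hn
        have hc0 : c = 0 := by nlinarith
        rw [hcd] at hc0
        rw [hNd] at h
        have h1 : n 1 = 0 := by nlinarith [sq_nonneg (n 1), sq_nonneg (n 2), sq_nonneg (n 3)]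
        have h2 : n 2 = 0 := by nlinarith [sq_nonneg (n 1), sq_nonneg (n 2), sq_nonneg (n 3)]
        have h3 : n 3 = 0 := by nlinarith [sq_nonneg (n 1), sq_nonneg (n 2), sq_nonneg (n 3)]
        funext i
        fin_cases i
        · simpa using hc0
        · simpa using h1
        · simpa using h2
        · simpa using h3
    have hS2 : S^2 ≤ X*N := by
      rw [hSd, hXd, hNd]
      nlinarith [sq_nonneg (x 1 * n 2 - x 2 * n 1), sq_nonneg (x 1 * n 3 - x 3 * n 1),
        sq_nonneg (x 2 * n 3 - x 3 * n 2)]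
    have hA0 : 0 ≤ A := by rw [hAd]; linarith
    have hfs : c ≠ 0 → 0 < A*(-1/c)^2 + 2*(S-c)*(-1/c) + (X-1) := by
      intro hc
      have hval : A*(-1/c)^2 + 2*(S-c)*(-1/c) + (X-1) = (N + X*c^2 - 2*S*c)/c^2 := by
        rw [hAd]; field_simp; ring
      rw [hval]
      exact div_pos (aux_fpos S N X c hS2 hNc hX0 hX hN) (by positivity)
    have h1ctneg : ∀ t : ℝ, t < 0 → A*t^2 + 2*(S-c)*t + (X-1) = 0 → 0 < 1 + c*t := by
      intro t ht hroot
      by_contra hcon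
      push_neg at hcon
      have hc : 0 < c := by nlinarith
      refine aux_root_neg A (S-c) X (-1/c) t hA0 hX hroot (hfs (ne_of_gt hc)) ?_ ?_
      · exact div_neg_of_neg_of_pos (by norm_num) hc
      · rw [le_div_iff₀ hc]
        nlinarith
    have h1ctpos : ∀ t : ℝ, 0 < t → A*t^2 + 2*(S-c)*t + (X-1) = 0 → 0 < 1 + c*t := by
      intro t ht hroot
      by_contra hcon
      push_neg at hcon
      have hc : c < 0 := by nlinarith
      refine aux_root_pos A (S-c) X (-1/c) t hA0 hX hroot (hfs (ne_of_lt hc)) ?_ ?_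
      · exact div_pos_of_neg_of_neg (by norm_num) hc
      · rw [div_le_iff_of_neg hc]
        nlinarith
    have hrootid : ∀ t : ℝ, A*t^2 + 2*(S-c)*t + (X-1)
        = (X + 2*S*t + N*t^2) - (1+c*t)^2 := by
      intro t; rw [hAd]; ring
    have hpure_t : ∀ t : ℝ, 0 < 1 + c*t → A*t^2 + 2*(S-c)*t + (X-1) = 0 →
        ((1+c*t)⁻¹ • (x + t • n)) 0 = 1 ∧
        (((1+c*t)⁻¹ • (x + t • n)) 1)^2 + (((1+c*t)⁻¹ • (x + t • n)) 2)^2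
          + (((1+c*t)⁻¹ • (x + t • n)) 3)^2 = 1 := by
      intro t h1 hroot
      have hne : (1 + c*t) ≠ 0 := ne_of_gt h1
      have h2 : X + 2*S*t + N*t^2 = (1+c*t)^2 := by
        have := hrootid t
        rw [hroot] at this
        linarith
      rw [hXd, hSd, hNd] at h2
      constructor
      · simp only [Pi.smul_apply, Pi.add_apply, smul_eq_mul]
        rw [hx0, ← hcd]
        field_simp
      · simp only [Pi.smul_apply, Pi.add_apply, smul_eq_mul]
        field_simp
        linear_combination h2
    have hyq : ∀ t : ℝ, 0 < 1 + c*t →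
        Real.sqrt (q ((1+c*t)⁻¹ • (x + t • n))) = (1+c*t)⁻¹ * Real.sqrt (q x) := by
      intro t h1
      rw [hqsmul, hker, Real.sqrt_mul (sq_nonneg _), Real.sqrt_sq (by positivity)]
    rcases lt_or_eq_of_le hA0 with hApos | hAeq
    · -- A > 0 : two roots
      have hD : 0 < (S-c)^2 + A*(1-X) := by nlinarith [sq_nonneg (S-c)]
      set u := Real.sqrt ((S-c)^2 + A*(1-X)) with hud
      have hu2 : u^2 = (S-c)^2 + A*(1-X) := Real.sq_sqrt hD.le
      have habs : |S - c| < u := by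
        rw [hud, ← Real.sqrt_sq_eq_abs]
        exact Real.sqrt_lt_sqrt (sq_nonneg _) (by nlinarith)
      have hb1 : S - c < u := lt_of_le_of_lt (le_abs_self _) habs
      have hb2 : -(S - c) < u := lt_of_le_of_lt (neg_le_abs _) habs
      set t₁ := ((c - S) + u)/A with ht1d
      set t₂ := ((c - S) - u)/A with ht2d
      have hAne : A ≠ 0 := ne_of_gt hApos
      have ht1pos : 0 < t₁ := div_pos (by linarith) hApos
      have ht2neg : t₂ < 0 := div_neg_of_neg_of_pos (by linarith) hApos
      have hAt1 : A * t₁ = c - S + u := by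
        rw [ht1d]; field_simp
      have hAt2 : A * t₂ = c - S - u := by
        rw [ht2d]; field_simp
      have hroot1 : A*t₁^2 + 2*(S-c)*t₁ + (X-1) = 0 := by
        have h0 : A * (A*t₁^2 + 2*(S-c)*t₁ + (X-1)) = 0 := by
          have he : A * (A*t₁^2 + 2*(S-c)*t₁ + (X-1))
              = (A*t₁)^2 + 2*(S-c)*(A*t₁) + A*(X-1) := by ring
          rw [he, hAt1]; linear_combination hu2
        exact (mul_eq_zero.1 h0).resolve_left hAne
      have hroot2 : A*t₂^2 + 2*(S-c)*t₂ + (X-1) = 0 := by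
        have h0 : A * (A*t₂^2 + 2*(S-c)*t₂ + (X-1)) = 0 := by
          have he : A * (A*t₂^2 + 2*(S-c)*t₂ + (X-1))
              = (A*t₂)^2 + 2*(S-c)*(A*t₂) + A*(X-1) := by ring
          rw [he, hAt2]; linear_combination hu2
        exact (mul_eq_zero.1 h0).resolve_left hAne
      have h1ct1 : 0 < 1 + c*t₁ := h1ctpos t₁ ht1pos hroot1
      have h1ct2 : 0 < 1 + c*t₂ := h1ctneg t₂ ht2neg hroot2
      have htt : 0 < t₁ - t₂ := by linarith
      have httne : t₁ - t₂ ≠ 0 := ne_of_gt htt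
      set α := (-t₂)/(t₁ - t₂) with hαd
      set β := t₁/(t₁ - t₂) with hβd
      have hα : 0 ≤ α := div_nonneg (by linarith) htt.le
      have hβ : 0 ≤ β := div_nonneg ht1pos.le htt.le
      have hαβ : α + β = 1 := by rw [hαd, hβd]; field_simp; ring
      have hαt : α*t₁ + β*t₂ = 0 := by rw [hαd, hβd]; field_simp; ring
      refine ⟨2, ![α*(1+c*t₁), β*(1+c*t₂)],
        ![(1+c*t₁)⁻¹ • (x + t₁ • n), (1+c*t₂)⁻¹ • (x + t₂ • n)], ?_, ?_, ?_, ?_, ?_⟩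
      · intro j
        fin_cases j
        · simpa using mul_nonneg hα h1ct1.le
        · simpa using mul_nonneg hβ h1ct2.le
      · rw [Fin.sum_univ_two]
        simp only [Matrix.cons_val_zero, Matrix.cons_val_one, Matrix.head_cons]
        rw [hαd, hβd]; field_simp; ring
      · intro j
        fin_cases j
        · exact hpure_t t₁ h1ct1 hroot1
        · exact hpure_t t₂ h1ct2 hroot2
      · rw [Fin.sum_univ_two]
        simp only [Matrix.cons_val_zero, Matrix.cons_val_one, Matrix.head_cons]
        funext i
        simp only [Pi.add_apply, Pi.smul_apply, smul_eq_mul]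
        have e1 : α*(1+c*t₁) * ((1+c*t₁)⁻¹ * (x i + t₁ * n i)) = α * (x i + t₁ * n i) := by
          field_simp
        have e2 : β*(1+c*t₂) * ((1+c*t₂)⁻¹ * (x i + t₂ * n i)) = β * (x i + t₂ * n i) := by
          field_simp
        rw [e1, e2]
        linear_combination (-(x i)) * hαβ - (n i) * hαt
      · rw [Fin.sum_univ_two]
        simp only [Matrix.cons_val_zero, Matrix.cons_val_one, Matrix.head_cons]
        rw [hyq t₁ h1ct1, hyq t₂ h1ct2]
        have e1 : α*(1+c*t₁) * ((1+c*t₁)⁻¹ * Real.sqrt (q x)) = α * Real.sqrt (q x) := by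
          field_simp
        have e2 : β*(1+c*t₂) * ((1+c*t₂)⁻¹ * Real.sqrt (q x)) = β * Real.sqrt (q x) := by
          field_simp
        rw [e1, e2]
        linear_combination (Real.sqrt (q x)) * hαβ.symm
    · -- A = 0 : one root plus the lightlike direction
      have hNc2 : N = c^2 := by rw [hAd] at hAeq; linarith
      have hc : c ≠ 0 := by
        intro h
        rw [h] at hNc2
        simp at hNc2
        exact (ne_of_gt hN) hNc2
      have hc2 : 0 < c^2 := by positivity
      have hSc : c*S < c^2 := by nlinarith [hS2, sq_nonneg (c - S)]
      have hScneg : c*(S - c) < 0 := by nlinarith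
      have hbne : S - c ≠ 0 := by
        intro h
        rw [h] at hScneg
        simp at hScneg
      set t₀ := (1 - X)/(2*(S - c)) with ht0d
      have hroot0 : A*t₀^2 + 2*(S-c)*t₀ + (X-1) = 0 := by
        rw [← hAeq, ht0d]; field_simp; ring
      have hct0 : c*t₀ < 0 := by
        have h2 : c*t₀ * (2*(S-c)^2) = (1-X)*(c*(S-c)) := by
          rw [ht0d]; field_simp
        have h3 : (1-X)*(c*(S-c)) < 0 := mul_neg_of_pos_of_neg (by linarith) hScneg
        nlinarith [sq_nonneg (S-c), sq_pos_of_ne_zero hbne]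
      have ht0ne : t₀ ≠ 0 := by
        intro h
        rw [h, mul_zero] at hct0
        exact absurd hct0 (by norm_num)
      have h1ct0 : 0 < 1 + c*t₀ := by
        rcases lt_or_gt_of_ne ht0ne with h | h
        · exact h1ctneg t₀ h hroot0
        · exact h1ctpos t₀ h hroot0
      refine ⟨2, ![1 + c*t₀, -(c*t₀)], ![(1+c*t₀)⁻¹ • (x + t₀ • n), c⁻¹ • n],
        ?_, ?_, ?_, ?_, ?_⟩
      · intro j
        fin_cases j
        · simpa using h1ct0.le
        · simpa using (neg_nonneg.2 hct0.le)
      · rw [Fin.sum_univ_two]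
        simp only [Matrix.cons_val_zero, Matrix.cons_val_one, Matrix.head_cons]
        ring
      · intro j
        fin_cases j
        · exact hpure_t t₀ h1ct0 hroot0
        · have hcc : (c⁻¹ • n) 0 = 1 := by
            simp only [Pi.smul_apply, smul_eq_mul, ← hcd]
            exact inv_mul_cancel₀ hc
          have hss : ((c⁻¹ • n) 1)^2 + ((c⁻¹ • n) 2)^2 + ((c⁻¹ • n) 3)^2 = 1 := by
            simp only [Pi.smul_apply, smul_eq_mul]
            have hNc2' : (n 1)^2 + (n 2)^2 + (n 3)^2 = c^2 := by
              rw [← hNd]; exact hNc2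
            field_simp
            linear_combination hNc2'
          exact ⟨hcc, hss⟩
      · rw [Fin.sum_univ_two]
        simp only [Matrix.cons_val_zero, Matrix.cons_val_one, Matrix.head_cons]
        funext i
        simp only [Pi.add_apply, Pi.smul_apply, smul_eq_mul]
        have e1 : (1+c*t₀) * ((1+c*t₀)⁻¹ * (x i + t₀ * n i)) = x i + t₀ * n i := by
          field_simp
        have e2 : (-(c*t₀)) * (c⁻¹ * n i) = -(t₀ * n i) := by
          field_simp
        rw [e1, e2]
        ring
      · rw [Fin.sum_univ_two]
        simp only [Matrix.cons_val_zero, Matrix.cons_val_one, Matrix.head_cons]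
        rw [hyq t₀ h1ct0]
        have e3 : Real.sqrt (q (c⁻¹ • n)) = 0 := by
          rw [hqsmul, hqn, mul_zero, Real.sqrt_zero]
        rw [e3]
        have e1 : (1+c*t₀) * ((1+c*t₀)⁻¹ * Real.sqrt (q x)) = Real.sqrt (q x) := by
          field_simp
        rw [e1]
        ring
end
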